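/- In a dagger category, a map f : A ⟶ B has a †-group inverse if and only if both endomorphisms f ≫ f† : A ⟶ A and f† ≫ f : B ⟶ B have group inverses. -/
import Mathlib


open CategoryTheory

universe v u

/-- A dagger on a category: an identity-on-objects contravariant involution. -/
structure Dagger (C : Type u) [Category.{v} C] where
  dag : ∀ {X Y : C}, (X ⟶ Y) → (Y ⟶ X)
  dag_id : ∀ X : C, dag (𝟙 X) = 𝟙 X
  dag_comp : ∀ {X Y Z : C} (f : X ⟶ Y) (g : Y ⟶ Z), dag (f ≫ g) = dag g ≫ dag f
  dag_dag : ∀ {X Y : C} (f : X ⟶ Y), dag (dag f) = f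

/-- Iterated composition power of an endomorphism, with `cpow x 0 = 𝟙 A`. -/
def cpow {C : Type u} [Category.{v} C] {A : C} (x : A ⟶ A) : ℕ → (A ⟶ A)
  | 0 => 𝟙 A
  | n + 1 => cpow x n ≫ x

/-- `p` is a †-Drazin inverse of `f`. -/
def IsDagDrazinInv {C : Type u} [Category.{v} C] (D : Dagger C)
    {A B : C} (f : A ⟶ B) (p : B ⟶ A) : Prop :=
  (∃ k : ℕ, cpow (f ≫ D.dag f) k ≫ f ≫ p = cpow (f ≫ D.dag f) k ∧
    p ≫ f ≫ cpow (D.dag f ≫ f) k = cpow (D.dag f ≫ f) k) ∧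
  p ≫ f ≫ p = p ∧
  D.dag (f ≫ p) = f ≫ p ∧
  D.dag (p ≫ f) = p ≫ f

/-- `p` is a †-group inverse of `f`. -/
def IsDagGroupInv {C : Type u} [Category.{v} C] (D : Dagger C)
    {A B : C} (f : A ⟶ B) (p : B ⟶ A) : Prop :=
  f ≫ D.dag f ≫ f ≫ p = f ≫ D.dag f ∧
  p ≫ f ≫ D.dag f ≫ f = D.dag f ≫ f ∧
  p ≫ f ≫ p = p ∧
  D.dag (f ≫ p) = f ≫ p ∧
  D.dag (p ≫ f) = p ≫ f

/-- `g` is a group inverse of the endomorphism `x`. -/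
def IsGroupInv {C : Type u} [Category.{v} C] {A : C} (x g : A ⟶ A) : Prop :=
  x ≫ g ≫ x = x ∧ g ≫ x ≫ g = g ∧ x ≫ g = g ≫ x

/-- Group inverses are unique. -/
theorem groupInv_unique' {C : Type u} [Category.{v} C] {A : C} {x g g' : A ⟶ A}
    (hg : IsGroupInv x g) (hg' : IsGroupInv x g') : g = g' := by
  obtain ⟨a1, a2, a3⟩ := hg
  obtain ⟨b1, b2, b3⟩ := hg'
  have key : x ≫ g = x ≫ g' := by
    have h1 : x ≫ g ≫ x ≫ g' = x ≫ g' := by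
      rw [reassoc_of% a1]
    have h2 : x ≫ g ≫ x ≫ g' = x ≫ g := by
      rw [b3, reassoc_of% a3, b1, ← a3]
    rw [← h1, h2]
  calc g = g ≫ x ≫ g := a2.symm
    _ = g ≫ x ≫ g' := by rw [key]
    _ = g' := by rw [← reassoc_of% a3, reassoc_of% key, reassoc_of% b3, b2]

/-- `f` has a †-group inverse iff both `f ≫ f†` and `f† ≫ f` have group inverses. -/
theorem dagGroupInv_iff_groupInv {C : Type u} [Category.{v} C] (D : Dagger C)
    {A B : C} (f : A ⟶ B) :
    (∃ p : B ⟶ A, IsDagGroupInv D f p) ↔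
    ((∃ g : A ⟶ A, IsGroupInv (f ≫ D.dag f) g) ∧
     (∃ h : B ⟶ B, IsGroupInv (D.dag f ≫ f) h)) := by
  constructor
  · rintro ⟨p, h1, h2, h3, h4, h5⟩
    -- abbreviations: df := D.dag f, dp := D.dag p
    have dpf : D.dag p ≫ D.dag f = f ≫ p := by
      rw [← D.dag_comp]; exact h4
    have dfp : D.dag f ≫ D.dag p = p ≫ f := by
      rw [← D.dag_comp]; exact h5
    -- dagger of h1 : f ≫ p ≫ f ≫ df = f ≫ df
    have eu : f ≫ p ≫ f ≫ D.dag f = f ≫ D.dag f := by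
      have := congrArg D.dag h1
      simp only [D.dag_comp, D.dag_dag, Category.assoc] at this
      rwa [reassoc_of% dpf] at this
    -- dagger of h2 : df ≫ f ≫ p ≫ f = df ≫ f
    have vq : D.dag f ≫ f ≫ p ≫ f = D.dag f ≫ f := by
      have := congrArg D.dag h2
      simp only [D.dag_comp, D.dag_dag, Category.assoc] at this
      rwa [dfp] at this
    constructor
    · refine ⟨D.dag p ≫ p, ?_, ?_, ?_⟩ <;> simp only [Category.assoc]
      · rw [reassoc_of% dfp, reassoc_of% h3, eu]
      · rw [reassoc_of% dfp, reassoc_of% h3, h3]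
      · have L : f ≫ D.dag f ≫ D.dag p ≫ p = f ≫ p := by
          rw [reassoc_of% dfp, h3]
        have R : D.dag p ≫ p ≫ f ≫ D.dag f = f ≫ p := by
          rw [← reassoc_of% dfp, reassoc_of% dpf, dpf, h3]
        rw [L, R]
    · refine ⟨p ≫ D.dag p, ?_, ?_, ?_⟩ <;> simp only [Category.assoc]
      · rw [reassoc_of% dpf, reassoc_of% h3, vq]
      · rw [reassoc_of% dpf, reassoc_of% h3, reassoc_of% h3]
      · have L : D.dag f ≫ f ≫ p ≫ D.dag p = p ≫ f := by
          rw [← reassoc_of% dpf, reassoc_of% dfp, dfp, reassoc_of% h3]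
        have R : p ≫ D.dag p ≫ D.dag f ≫ f = p ≫ f := by
          rw [reassoc_of% dpf, reassoc_of% h3]
        rw [L, R]
  · rintro ⟨⟨g, hg⟩, ⟨h, hh⟩⟩
    -- D.dag g is also a group inverse of f ≫ D.dag f, hence equals g
    have hgd : IsGroupInv (f ≫ D.dag f) (D.dag g) := by
      obtain ⟨a1, a2, a3⟩ := hg
      refine ⟨?_, ?_, ?_⟩
      · have := congrArg D.dag a1
        simp only [D.dag_comp, D.dag_dag, Category.assoc] at this ⊢
        exact this
      · have := congrArg D.dag a2
        simp only [D.dag_comp, D.dag_dag, Category.assoc] at this ⊢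
        exact this
      · have := congrArg D.dag a3
        simp only [D.dag_comp, D.dag_dag, Category.assoc] at this ⊢
        exact this.symm
    have hgg : D.dag g = g := groupInv_unique' hgd hg
    obtain ⟨g1, g2, g3⟩ := hg
    obtain ⟨hh1, hh2, hh3⟩ := hh
    simp only [Category.assoc] at g1 g2 g3 hh1 hh2 hh3
    -- u² g = u
    have uug : f ≫ D.dag f ≫ f ≫ D.dag f ≫ g = f ≫ D.dag f := by
      rw [g3, g1]
    -- v² h = v
    have vvh : D.dag f ≫ f ≫ D.dag f ≫ f ≫ h = D.dag f ≫ f := by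
      rw [hh3, hh1]
    -- key: (u g) ≫ f = f ≫ (v h)
    have key1 : f ≫ D.dag f ≫ g ≫ f = f ≫ D.dag f ≫ f ≫ h := by
      calc f ≫ D.dag f ≫ g ≫ f = g ≫ f ≫ D.dag f ≫ f := by
            rw [reassoc_of% g3]
        _ = g ≫ f ≫ D.dag f ≫ f ≫ D.dag f ≫ f ≫ h := by rw [vvh]
        _ = f ≫ D.dag f ≫ g ≫ f ≫ D.dag f ≫ f ≫ h := by
            rw [← reassoc_of% g3]
        _ = f ≫ D.dag f ≫ f ≫ h := by rw [reassoc_of% g1]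
    refine ⟨D.dag f ≫ g, ?_, ?_, ?_, ?_, ?_⟩
    · exact uug
    · simp only [Category.assoc]
      rw [← reassoc_of% g3, key1, vvh]
    · simp only [Category.assoc]
      rw [g2]
    · simp only [D.dag_comp, D.dag_dag, hgg, Category.assoc]
      exact g3.symm
    · simp only [D.dag_comp, D.dag_dag, hgg, Category.assoc]
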